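/- (Decomposition of the inconsistency probability over conflict-independent parts.) Let D₁ and D₂ be disjoint finite sets with no conflicts across them (¬C(a,b) for all a ∈ D₁, b ∈ D₂), and set n₁ = |D₁|, n₂ = |D₂|, n = n₁ + n₂. For 0 ≤ m ≤ n, let P^m be the probability that a uniformly random m-element subset of D₁ ∪ D₂ is inconsistent, and for i ∈ {1,2} and 0 ≤ mᵢ ≤ nᵢ let Tᵢ^{mᵢ} be the probability that a uniformly random mᵢ-element subset of Dᵢ is inconsistent. Then P^m = (1/C(n,m)) · Σ_{m₁+m₂=m, 0≤m₁≤n₁, 0≤m₂≤n₂} C(n₁,m₁) · C(n₂,m₂) · (1 − (1 − T₁^{m₁}) · (1 − T₂^{m₂})). -/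

import Mathlib

open scoped BigOperators Classical

variable {α : Type*} [DecidableEq α]

/-- A finite set `E` is consistent if it contains no two distinct conflicting elements. -/
def Consistent (C : α → α → Prop) (E : Finset α) : Prop :=
  ∀ g ∈ E, ∀ h ∈ E, g ≠ h → ¬ C g h

/-- The probability that a uniformly random `m`-element subset of `T` is inconsistent. -/
noncomputable def inconsProb (C : α → α → Prop) (T : Finset α) (m : ℕ) : ℝ :=
  (((T.powersetCard m).filter fun S => ¬ Consistent C S).card : ℝ) / (T.card.choose m : ℝ)

lemma Consistent.mono {C : α → α → Prop} {S T : Finset α} (h : S ⊆ T)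
    (hT : Consistent C T) : Consistent C S :=
  fun g hg h' hh' => hT g (h hg) h' (h hh')

lemma consistent_count_le {C : α → α → Prop} (D : Finset α) (k : ℕ) :
    ((D.powersetCard k).filter (fun S => Consistent C S)).card ≤ D.card.choose k := by
  calc ((D.powersetCard k).filter (fun S => Consistent C S)).card
      ≤ (D.powersetCard k).card := Finset.card_filter_le _ _
    _ = D.card.choose k := Finset.card_powersetCard _ _

/-- Counting lemma: consistent `m`-subsets of `D₁ ∪ D₂` decompose. -/
lemma consistent_count_union (C : α → α → Prop) (hsymm : Symmetric C)
    (D₁ D₂ : Finset α) (hdisj : Disjoint D₁ D₂)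
    (hcross : ∀ a ∈ D₁, ∀ b ∈ D₂, ¬ C a b) (m : ℕ) :
    (((D₁ ∪ D₂).powersetCard m).filter (fun S => Consistent C S)).card
      = ∑ p ∈ Finset.HasAntidiagonal.antidiagonal m,
          ((D₁.powersetCard p.1).filter (fun S => Consistent C S)).card *
          ((D₂.powersetCard p.2).filter (fun S => Consistent C S)).card := by
  classical
  have hcard : ∀ p ∈ Finset.HasAntidiagonal.antidiagonal m, True := fun _ _ => trivial
  rw [show (∑ p ∈ Finset.HasAntidiagonal.antidiagonal m,
      ((D₁.powersetCard p.1).filter (fun S => Consistent C S)).card *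
      ((D₂.powersetCard p.2).filter (fun S => Consistent C S)).card)
    = ((Finset.HasAntidiagonal.antidiagonal m).sigma (fun p =>
        ((D₁.powersetCard p.1).filter (fun S => Consistent C S)) ×ˢ
        ((D₂.powersetCard p.2).filter (fun S => Consistent C S)))).card by
      rw [Finset.card_sigma]; exact Finset.sum_congr rfl fun p _ => (Finset.card_product _ _).symm]
  refine Finset.card_bij' (fun S _ => ⟨((S ∩ D₁).card, (S ∩ D₂).card), (S ∩ D₁, S ∩ D₂)⟩)
    (fun x _ => x.2.1 ∪ x.2.2) ?_ ?_ ?_ ?_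
  · intro S hS
    simp only [Finset.mem_filter, Finset.mem_powersetCard] at hS
    obtain ⟨⟨hsub, hcardS⟩, hcons⟩ := hS
    have h1 : S ∩ D₁ ⊆ D₁ := Finset.inter_subset_right
    have h2 : S ∩ D₂ ⊆ D₂ := Finset.inter_subset_right
    have hsplit : (S ∩ D₁) ∪ (S ∩ D₂) = S := by
      rw [← Finset.inter_union_distrib_left]
      exact Finset.inter_eq_left.mpr hsub
    have hdisj' : Disjoint (S ∩ D₁) (S ∩ D₂) :=
      hdisj.mono Finset.inter_subset_right Finset.inter_subset_right
    simp only [Finset.mem_sigma, Finset.HasAntidiagonal.mem_antidiagonal, Finset.mem_product,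
      Finset.mem_filter, Finset.mem_powersetCard]
    refine ⟨?_, ⟨⟨h1, trivial⟩, hcons.mono Finset.inter_subset_left⟩,
      ⟨⟨h2, trivial⟩, hcons.mono Finset.inter_subset_left⟩⟩ <;> try trivial
    rw [← Finset.card_union_of_disjoint hdisj', hsplit, hcardS]
  · intro x hx
    simp only [Finset.mem_sigma, Finset.HasAntidiagonal.mem_antidiagonal, Finset.mem_product,
      Finset.mem_filter, Finset.mem_powersetCard] at hx
    obtain ⟨hsum, ⟨⟨hsub1, hc1⟩, hcons1⟩, ⟨hsub2, hc2⟩, hcons2⟩ := hx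
    have hdisj' : Disjoint x.2.1 x.2.2 := hdisj.mono hsub1 hsub2
    simp only [Finset.mem_filter, Finset.mem_powersetCard]
    constructor
    · constructor
      · exact Finset.union_subset (hsub1.trans Finset.subset_union_left)
          (hsub2.trans Finset.subset_union_right)
      · rw [Finset.card_union_of_disjoint hdisj', hc1, hc2, hsum]
    · intro g hg h hh hne
      rcases Finset.mem_union.mp hg with hg1 | hg2 <;>
        rcases Finset.mem_union.mp hh with hh1 | hh2
      · exact hcons1 g hg1 h hh1 hne
      · exact hcross g (hsub1 hg1) h (hsub2 hh2)
      · exact fun hC => hcross h (hsub1 hh1) g (hsub2 hg2) (hsymm hC)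
      · exact hcons2 g hg2 h hh2 hne
  · intro S hS
    simp only [Finset.mem_filter, Finset.mem_powersetCard] at hS
    show (S ∩ D₁) ∪ (S ∩ D₂) = S
    rw [← Finset.inter_union_distrib_left]
    exact Finset.inter_eq_left.mpr hS.1.1
  · intro x hx
    obtain ⟨⟨p₁, p₂⟩, S₁, S₂⟩ := x
    simp only [Finset.mem_sigma, Finset.mem_antidiagonal, Finset.mem_product,
      Finset.mem_filter, Finset.mem_powersetCard] at hx
    obtain ⟨hsum, ⟨⟨hsub1, hc1⟩, _⟩, ⟨hsub2, hc2⟩, _⟩ := hx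
    have h21 : S₂ ∩ D₁ = ∅ :=
      Finset.disjoint_iff_inter_eq_empty.mp (hdisj.symm.mono_left hsub2)
    have h12 : S₁ ∩ D₂ = ∅ :=
      Finset.disjoint_iff_inter_eq_empty.mp (hdisj.mono_left hsub1)
    have e1 : (S₁ ∪ S₂) ∩ D₁ = S₁ := by
      rw [Finset.union_inter_distrib_right, Finset.inter_eq_left.mpr hsub1, h21,
        Finset.union_empty]
    have e2 : (S₁ ∪ S₂) ∩ D₂ = S₂ := by
      rw [Finset.union_inter_distrib_right, Finset.inter_eq_left.mpr hsub2, h12,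
        Finset.empty_union]
    simp only [e1, e2, hc1, hc2]

theorem inconsProb_union_decomposition (C : α → α → Prop) (hsymm : Symmetric C)
    (D₁ D₂ : Finset α) (hdisj : Disjoint D₁ D₂)
    (hcross : ∀ a ∈ D₁, ∀ b ∈ D₂, ¬ C a b)
    (m : ℕ) (hm : m ≤ D₁.card + D₂.card) :
    inconsProb C (D₁ ∪ D₂) m =
      (1 / (((D₁.card + D₂.card).choose m : ℕ) : ℝ)) *
        ∑ p ∈ (Finset.HasAntidiagonal.antidiagonal m).filter
            (fun p => p.1 ≤ D₁.card ∧ p.2 ≤ D₂.card),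
          (D₁.card.choose p.1 : ℝ) * (D₂.card.choose p.2 : ℝ) *
            (1 - (1 - inconsProb C D₁ p.1) * (1 - inconsProb C D₂ p.2)) := by
  classical
  set n₁ := D₁.card
  set n₂ := D₂.card
  set c₁ : ℕ → ℕ := fun k => ((D₁.powersetCard k).filter (fun S => Consistent C S)).card with hc₁
  set c₂ : ℕ → ℕ := fun k => ((D₂.powersetCard k).filter (fun S => Consistent C S)).card with hc₂
  have hchoose_pos : 0 < (n₁ + n₂).choose m := Nat.choose_pos hm
  have hN : ((n₁ + n₂).choose m : ℝ) ≠ 0 := by exact_mod_cast hchoose_pos.ne'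
  -- per-set complement formula
  have hcompl : ∀ (D : Finset α) (k : ℕ), k ≤ D.card →
      1 - inconsProb C D k
        = (((D.powersetCard k).filter (fun S => Consistent C S)).card : ℝ) / (D.card.choose k : ℝ) := by
    intro D k hk
    have hpos : (0:ℝ) < (D.card.choose k : ℝ) := by exact_mod_cast Nat.choose_pos hk
    have hsplit : ((D.powersetCard k).filter (fun S => Consistent C S)).card
        + ((D.powersetCard k).filter (fun S => ¬ Consistent C S)).card
        = D.card.choose k := by
      rw [Finset.card_filter_add_card_filter_not, Finset.card_powersetCard]
    rw [inconsProb]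
    field_simp
    push_cast [← hsplit]
    ring
  -- rewrite RHS sum
  have hsum : ∑ p ∈ (Finset.HasAntidiagonal.antidiagonal m).filter
            (fun p => p.1 ≤ n₁ ∧ p.2 ≤ n₂),
          (n₁.choose p.1 : ℝ) * (n₂.choose p.2 : ℝ) *
            (1 - (1 - inconsProb C D₁ p.1) * (1 - inconsProb C D₂ p.2))
      = ∑ p ∈ Finset.HasAntidiagonal.antidiagonal m,
          ((n₁.choose p.1 : ℝ) * (n₂.choose p.2 : ℝ) - (c₁ p.1 : ℝ) * (c₂ p.2 : ℝ)) := by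
    rw [Finset.sum_filter]
    refine Finset.sum_congr rfl fun p _ => ?_
    by_cases hp : p.1 ≤ n₁ ∧ p.2 ≤ n₂
    · rw [if_pos hp]
      have h1 : (0:ℝ) < (n₁.choose p.1 : ℝ) := by exact_mod_cast Nat.choose_pos hp.1
      have h2 : (0:ℝ) < (n₂.choose p.2 : ℝ) := by exact_mod_cast Nat.choose_pos hp.2
      rw [hcompl D₁ p.1 hp.1, hcompl D₂ p.2 hp.2]
      simp only [n₁, n₂, c₁, c₂] at h1 h2 ⊢
      field_simp
      try ring
    · rw [if_neg hp]
      rcases not_and_or.mp hp with h | h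
      · have hch : n₁.choose p.1 = 0 := Nat.choose_eq_zero_of_lt (lt_of_not_ge h)
        have hc : c₁ p.1 = 0 := Nat.le_zero.mp (hch ▸ consistent_count_le D₁ p.1)
        simp [hch, hc]
      · have hch : n₂.choose p.2 = 0 := Nat.choose_eq_zero_of_lt (lt_of_not_ge h)
        have hc : c₂ p.2 = 0 := Nat.le_zero.mp (hch ▸ consistent_count_le D₂ p.2)
        simp [hch, hc]
  rw [hsum, Finset.sum_sub_distrib]
  have hvand : ((n₁ + n₂).choose m : ℝ)
      = ∑ p ∈ Finset.HasAntidiagonal.antidiagonal m, (n₁.choose p.1 : ℝ) * (n₂.choose p.2 : ℝ) := by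
    rw [Nat.add_choose_eq]; push_cast; rfl
  have hcount := consistent_count_union C hsymm D₁ D₂ hdisj hcross m
  have hcons_split : (((D₁ ∪ D₂).powersetCard m).filter (fun S => Consistent C S)).card
      + (((D₁ ∪ D₂).powersetCard m).filter (fun S => ¬ Consistent C S)).card
      = (n₁ + n₂).choose m := by
    rw [Finset.card_filter_add_card_filter_not, Finset.card_powersetCard,
      Finset.card_union_of_disjoint hdisj]
  have hcsum : (∑ p ∈ Finset.HasAntidiagonal.antidiagonal m, (c₁ p.1 : ℝ) * (c₂ p.2 : ℝ))
      = ((∑ p ∈ Finset.HasAntidiagonal.antidiagonal m, c₁ p.1 * c₂ p.2 : ℕ) : ℝ) := by push_cast; rfl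
  rw [inconsProb, Finset.card_union_of_disjoint hdisj, ← hvand, hcsum, ← hcount]
  have : ((((D₁ ∪ D₂).powersetCard m).filter (fun S => ¬ Consistent C S)).card : ℝ)
      = ((n₁ + n₂).choose m : ℝ)
        - ((((D₁ ∪ D₂).powersetCard m).filter (fun S => Consistent C S)).card : ℝ) := by
    rw [← hcons_split]; push_cast; ring
  rw [this]
  simp only [n₁, n₂] at hN ⊢
  field_simp
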